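/- If I is a collection of identities all of which are realized by every ω-coloring of [ℵ_m]² (m ≥ 1), then every identity in the closure cl(I) under end-homogeneous amalgamation is realized by every ω-coloring of [ℵ_{m+1}]². -/

import Mathlib

/-- `f` realizes, within the set `S`, the identity represented by the coloring `g` with
finite field `G`: there is an injection `k` of `G` into `S` such that differently
`f`-colored image pairs come from differently `g`-colored pairs. -/
def RealizesWithin {β : Type*} (f : Sym2 β → ℕ) (G : Finset ℕ) (g : Sym2 ℕ → ℕ)
    (S : Set β) : Prop :=
  ∃ k : ℕ → β, Set.InjOn k G ∧ (∀ x ∈ G, k x ∈ S) ∧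
    ∀ x y u v : ℕ, x ∈ G → y ∈ G → u ∈ G → v ∈ G → x ≠ y → u ≠ v →
      f s(k x, k y) ≠ f s(k u, k v) → g s(x, y) ≠ g s(u, v)

/-- `f` realizes the identity represented by the coloring `g` with finite field `G`. -/
def RealizesId {β : Type*} (f : Sym2 β → ℕ) (G : Finset ℕ) (g : Sym2 ℕ → ℕ) : Prop :=
  RealizesWithin f G g Set.univ

/-- A type of cardinality `ℵ_m`. -/
def alephT (m : ℕ) : Type := ((Cardinal.aleph m).ord).ToType

namespace ClosureRealized

open Cardinal Set

/-- Closure construction: inside a set `A` of size at least `μ`, there is a set `C` of size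
exactly `μ` such that any of the distinguished sets `B S e` (for `S` a finite subset of `C`)
that has size at most `μ` is entirely contained in `C`. -/
lemma exists_closed {β : Type} {μ : Cardinal.{0}} (hμ : ℵ₀ ≤ μ) (A : Set β) (hA : μ ≤ #A)
    (B : Finset β → ℕ → Set β) (hB : ∀ S e, B S e ⊆ A) :
    ∃ C : Set β, C ⊆ A ∧ μ ≤ #C ∧ #C ≤ μ ∧
      ∀ S : Finset β, ↑S ⊆ C → ∀ e : ℕ, #(B S e) ≤ μ → B S e ⊆ C := by
  classical
  obtain ⟨C0, hC0A, hC0⟩ := le_mk_iff_exists_subset.mp hA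
  set t : (X : Set β) → Finset X × ℕ → Set β := fun X p =>
    if #(B (p.1.image Subtype.val) p.2) ≤ μ then B (p.1.image Subtype.val) p.2 else ∅ with ht
  set Φ : Set β → Set β := fun X => X ∪ ⋃ p : Finset X × ℕ, t X p with hΦ
  set D : ℕ → Set β := fun k => Φ^[k] C0 with hD
  have hDsucc : ∀ k, D (k + 1) = Φ (D k) := fun k => Function.iterate_succ_apply' Φ k C0
  have hΦsub : ∀ X, X ⊆ Φ X := fun X => Set.subset_union_left
  have hmonos : ∀ k, D k ⊆ D (k + 1) := fun k => by rw [hDsucc]; exact hΦsub _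
  have hDmono : Monotone D := monotone_nat_of_le_succ hmonos
  have hmul : ∀ a b : Cardinal, a ≤ μ → b ≤ μ → a * b ≤ μ := fun a b ha hb =>
    le_trans (mul_le_mul' ha hb) (le_of_eq (mul_eq_self hμ))
  have hadd : ∀ a b : Cardinal, a ≤ μ → b ≤ μ → a + b ≤ μ := fun a b ha hb =>
    le_trans (add_le_add ha hb) (le_of_eq (add_eq_self hμ))
  have hcard : ∀ k, μ ≤ #(D k) ∧ #(D k) ≤ μ ∧ D k ⊆ A := by
    intro k
    induction k with
    | zero =>
      have : D 0 = C0 := rfl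
      rw [this, hC0]
      exact ⟨le_rfl, le_rfl, hC0A⟩
    | succ k ih =>
      rw [hDsucc]
      have hinf : Infinite (D k) := by
        rw [Cardinal.infinite_iff]; exact le_trans hμ ih.1
      refine ⟨le_trans ih.1 (mk_le_mk_of_subset (hΦsub _)), ?_, ?_⟩
      · refine le_trans (mk_union_le _ _) (hadd _ _ ih.2.1 ?_)
        refine le_trans (mk_iUnion_le _) (hmul _ _ ?_ ?_)
        · have h1 : #(Finset (D k) × ℕ) = #(Finset (D k)) * #ℕ := by
            simpa using Cardinal.mk_prod (Finset (D k)) ℕ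
          rw [h1, mk_finset_of_infinite, mk_nat]
          exact hmul _ _ ih.2.1 hμ
        · refine ciSup_le' fun p => ?_
          by_cases h : #(B (p.1.image Subtype.val) p.2) ≤ μ
          · simpa [ht, h] using h
          · simp [ht, h]
      · refine Set.union_subset ih.2.2 (Set.iUnion_subset fun p => ?_)
        by_cases h : #(B (p.1.image Subtype.val) p.2) ≤ μ
        · simpa [ht, h] using hB (p.1.image Subtype.val) p.2
        · simp [ht, h]
  refine ⟨⋃ k, D k, Set.iUnion_subset fun k => (hcard k).2.2, ?_, ?_, ?_⟩
  · exact le_trans (hcard 0).1 (mk_le_mk_of_subset (Set.subset_iUnion D 0))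
  · refine le_trans (mk_iUnion_le _) (hmul _ _ ?_ (ciSup_le' fun k => (hcard k).2.1))
    rw [mk_nat]; exact hμ
  · intro S hS e he
    have hx : ∀ x ∈ S, ∃ k, x ∈ D k := by
      intro x hxS
      exact Set.mem_iUnion.mp (hS hxS)
    set g : β → ℕ := fun x => if h : ∃ k, x ∈ D k then Nat.find h else 0 with hg
    set k0 := S.sup g with hk0
    have hSk : ∀ x ∈ S, x ∈ D k0 := by
      intro x hxS
      have hh := hx x hxS
      have h1 : x ∈ D (g x) := by
        rw [hg]; simp only [dif_pos hh]; exact Nat.find_spec hh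
      exact hDmono (Finset.le_sup hxS) h1
    set F : Finset (D k0) := S.attach.map
      ⟨fun x => (⟨x.1, hSk x.1 x.2⟩ : D k0), by
        intro a b hab
        simp only [Subtype.mk.injEq] at hab
        exact Subtype.ext hab⟩ with hF
    have hFS : F.image Subtype.val = S := by
      ext x
      simp only [hF, Finset.mem_image, Finset.mem_map, Finset.mem_attach,
        Function.Embedding.coeFn_mk, true_and]
      constructor
      · rintro ⟨a, ⟨b, rfl⟩, rfl⟩; exact b.2
      · intro hxS; exact ⟨⟨x, hSk x hxS⟩, ⟨⟨x, hxS⟩, rfl⟩, rfl⟩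
    have hsub : B S e ⊆ Φ (D k0) := by
      intro b hb
      refine Set.mem_union_right _ (Set.mem_iUnion.mpr ⟨(F, e), ?_⟩)
      have : t (D k0) (F, e) = B S e := by
        rw [ht]; simp only [hFS]; rw [if_pos he]
      rw [this]; exact hb
    refine fun b hb => Set.mem_iUnion.mpr ⟨k0 + 1, ?_⟩
    rw [hDsucc]; exact hsub hb

/-- Pigeonhole: a coloring of a set of regular uncountable size `μ` by natural numbers has a
fiber of size at least `μ`. -/
lemma exists_big_fiber {β : Type} {μ : Cardinal.{0}} (hreg : μ.IsRegular) (hμ0 : ℵ₀ < μ)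
    (C : Set β) (hC : μ ≤ #C) (h : β → ℕ) : ∃ e, μ ≤ #{a | a ∈ C ∧ h a = e} := by
  by_contra hcon
  push_neg at hcon
  have hsub : C ⊆ ⋃ e : ℕ, {a | a ∈ C ∧ h a = e} := fun a ha =>
    Set.mem_iUnion.mpr ⟨h a, ha, rfl⟩
  have h1 : #C ≤ Cardinal.sum fun e : ℕ => #{a | a ∈ C ∧ h a = e} :=
    le_trans (mk_le_mk_of_subset hsub) mk_iUnion_le_sum_mk
  have h2 : Cardinal.sum (fun e : ℕ => #{a | a ∈ C ∧ h a = e}) < μ :=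
    sum_lt_of_isRegular hreg (by rw [mk_nat]; exact hμ0) hcon
  exact absurd (le_trans hC h1) (not_le.mpr h2)

/-- The key step: inside any subset `A` of size `> μ` one can realize an identity `⟨Jf, Jc⟩`
(which is realized by every coloring of a type `γ` of size `≤ μ`) in such a way that there is
a single color `e` and a further subset `A' ⊆ A` of size `> μ`, avoiding the realizing points,
with all pairs between the realizing points and `A'` colored `e`. -/
lemma step_realize {β γ : Type} {μ : Cardinal.{0}} (hreg : μ.IsRegular) (hμ0 : ℵ₀ < μ)
    (hγ : #γ ≤ μ) (f : Sym2 β → ℕ) (Jf : Finset ℕ) (Jc : Sym2 ℕ → ℕ)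
    (hJ : ∀ g : Sym2 γ → ℕ, RealizesId g Jf Jc)
    (A : Set β) (hA : μ < #A) :
    ∃ (k : ℕ → β) (e : ℕ) (A' : Set β),
      Set.InjOn k ↑Jf ∧ (∀ x ∈ Jf, k x ∈ A) ∧ A' ⊆ A ∧ (∀ x ∈ Jf, k x ∉ A') ∧ μ < #A' ∧
      (∀ x ∈ Jf, ∀ b ∈ A', f s(k x, b) = e) ∧
      (∀ x y u v : ℕ, x ∈ Jf → y ∈ Jf → u ∈ Jf → v ∈ Jf → x ≠ y → u ≠ v →
        f s(k x, k y) ≠ f s(k u, k v) → Jc s(x, y) ≠ Jc s(u, v)) := by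
  classical
  set B : Finset β → ℕ → Set β := fun S e =>
    {b | b ∈ A ∧ b ∉ S ∧ ∀ a ∈ S, f s(a, b) = e} with hBdef
  obtain ⟨C, hCA, hCge, hCle, hclosed⟩ :=
    exists_closed hμ0.le A hA.le B (fun S e b hb => hb.1)
  have hAC : ¬ A ⊆ C := by
    intro hsub
    exact absurd (le_trans (mk_le_mk_of_subset hsub) hCle) (not_le.mpr hA)
  obtain ⟨b0, hb0A, hb0C⟩ := Set.not_subset.mp hAC
  obtain ⟨e0, hT⟩ := exists_big_fiber hreg hμ0 C hCge (fun a => f s(a, b0))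
  set T : Set β := {a | a ∈ C ∧ f s(a, b0) = e0} with hTdef
  obtain ⟨j⟩ : Nonempty (γ ↪ T) := (Cardinal.le_def γ T).mp (le_trans hγ hT)
  set emb : γ → β := fun x => ((j x : T) : β) with hembdef
  have hembinj : Function.Injective emb := fun a b hab =>
    j.injective (Subtype.ext hab)
  have hembT : ∀ x, emb x ∈ T := fun x => (j x).2
  set g : Sym2 γ → ℕ := fun p => f (p.map emb) with hgdef
  obtain ⟨k0, hk0inj, -, hk0⟩ := hJ g
  set k : ℕ → β := fun x => emb (k0 x) with hkdef
  have hgf : ∀ a b : γ, g s(a, b) = f s(emb a, emb b) := fun a b => by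
    rw [hgdef]; simp only [Sym2.map_pair_eq]
  set S : Finset β := Jf.image k with hSdef
  have hSC : ↑S ⊆ C := by
    intro b hb
    obtain ⟨x, _, rfl⟩ := Finset.mem_image.mp hb
    exact (hembT (k0 x)).1
  have hb0S : b0 ∉ S := fun hmem => hb0C (hSC hmem)
  have hb0A' : b0 ∈ B S e0 := by
    refine ⟨hb0A, hb0S, ?_⟩
    intro a ha
    obtain ⟨x, _, rfl⟩ := Finset.mem_image.mp ha
    exact (hembT (k0 x)).2
  refine ⟨k, e0, B S e0, ?_, ?_, fun b hb => hb.1, ?_, ?_, ?_, ?_⟩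
  · intro a ha b hb hab
    exact hk0inj ha hb (hembinj hab)
  · intro x hx
    exact hCA (hSC (Finset.mem_image_of_mem k hx))
  · intro x hx hmem
    exact hmem.2.1 (Finset.mem_image_of_mem k hx)
  · by_contra hle
    push_neg at hle
    exact hb0C (hclosed S hSC e0 hle hb0A')
  · intro x hx b hb
    exact hb.2.2 (k x) (Finset.mem_image_of_mem k hx)
  · intro x y u v hx hy hu hv hxy huv hfne
    refine hk0 x y u v hx hy hu hv hxy huv ?_
    rw [hgf, hgf]
    exact hfne

/-- Building an infinite chain by repeated choice. -/
lemma chain_exists {β : Type} {μ : Cardinal.{0}}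
    (Q : Set β → ℕ → ((ℕ → β) × ℕ × Set β) → Prop)
    (step : ∀ A : Set β, μ < #A → ∀ j : ℕ, ∃ r : (ℕ → β) × ℕ × Set β, Q A j r ∧ μ < #r.2.2)
    (A0 : Set β) (h0 : μ < #A0) :
    ∃ (AA : ℕ → Set β) (K : ℕ → ℕ → β) (E : ℕ → ℕ), AA 0 = A0 ∧
      ∀ j, Q (AA j) j (K j, E j, AA (j + 1)) := by
  classical
  let F : ℕ → Σ' A : Set β, μ < #A := fun j =>
    Nat.rec ⟨A0, h0⟩ (fun j p =>
      ⟨(Classical.choose (step p.1 p.2 j)).2.2, (Classical.choose_spec (step p.1 p.2 j)).2⟩) j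
  refine ⟨fun j => (F j).1, fun j => (Classical.choose (step (F j).1 (F j).2 j)).1,
    fun j => (Classical.choose (step (F j).1 (F j).2 j)).2.1, rfl, fun j => ?_⟩
  exact (Classical.choose_spec (step (F j).1 (F j).2 j)).1

end ClosureRealized

/-- If every identity in `I` is realized by every ω-coloring of `[ℵ_m]²`, then every
end-homogeneous amalgam of a finite sequence of identities from `I` (i.e. every member of
`cl(I)`) is realized by every ω-coloring of `[ℵ_{m+1}]²`. -/
theorem closure_realized_at_successor (m : ℕ) (hm : 1 ≤ m)
    (I : Set ((G : Finset ℕ) × (Sym2 ℕ → ℕ)))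
    (hI : ∀ J ∈ I, ∀ g : Sym2 (alephT m) → ℕ, RealizesId g J.1 J.2)
    -- an end-homogeneous amalgam `⟨G, c⟩` of a sequence `⟨Js 1, …, Js n⟩` from `I`:
    (n : ℕ) (hn : 1 ≤ n) (Js : Fin n → (G : Finset ℕ) × (Sym2 ℕ → ℕ))
    (hJsI : ∀ i, Js i ∈ I)
    -- pairwise disjoint fields
    (hdisj : ∀ i j : Fin n, i ≠ j → Disjoint (Js i).1 (Js j).1)
    -- pairwise disjoint ranges of the representatives
    (hranges : ∀ i j : Fin n, i ≠ j → ∀ x y u v : ℕ,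
      x ∈ (Js i).1 → y ∈ (Js i).1 → x ≠ y → u ∈ (Js j).1 → v ∈ (Js j).1 → u ≠ v →
      (Js i).2 s(x, y) ≠ (Js j).2 s(u, v))
    (G : Finset ℕ) (hG : G = Finset.univ.biUnion fun i => (Js i).1)
    (ι : ℕ → Fin n) (hι : ∀ i : Fin n, ∀ x ∈ (Js i).1, ι x = i)
    (c : Sym2 ℕ → ℕ)
    -- `c` extends each `c_i`
    (hext : ∀ i : Fin n, ∀ x y : ℕ, x ∈ (Js i).1 → y ∈ (Js i).1 → x ≠ y →
      c s(x, y) = (Js i).2 s(x, y))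
    -- `c({r,s}) ∈ rng(c_i)` iff `{r,s} ∈ dom(c_i)`
    (hrng : ∀ i : Fin n, ∀ r s : ℕ, r ∈ G → s ∈ G → r ≠ s →
      ((∃ x y : ℕ, x ∈ (Js i).1 ∧ y ∈ (Js i).1 ∧ x ≠ y ∧ c s(r, s) = (Js i).2 s(x, y)) ↔
        (r ∈ (Js i).1 ∧ s ∈ (Js i).1)))
    -- cross pairs are colored according to the least index met
    (hcross : ∀ r s t w : ℕ, r ∈ G → s ∈ G → t ∈ G → w ∈ G → r ≠ s → t ≠ w →
      ι r ≠ ι s → ι t ≠ ι w →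
      (c s(r, s) = c s(t, w) ↔ min (ι r) (ι s) = min (ι t) (ι w))) :
    ∀ f : Sym2 (alephT (m + 1)) → ℕ, RealizesId f G c := by
  classical
  intro f
  set μ : Cardinal := Cardinal.aleph m with hμdef
  -- basic cardinal facts
  have hmkm : Cardinal.mk (alephT m) = μ := by
    rw [hμdef]
    show Cardinal.mk ((Cardinal.aleph m).ord).ToType = Cardinal.aleph m
    rw [Cardinal.mk_toType, Cardinal.card_ord]
  have hmkb : Cardinal.mk (alephT (m + 1)) = Cardinal.aleph (m + 1) := by
    show Cardinal.mk ((Cardinal.aleph (m + 1)).ord).ToType = Cardinal.aleph (m + 1)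
    rw [Cardinal.mk_toType, Cardinal.card_ord]
  have hmub : μ < Cardinal.mk (alephT (m + 1)) := by
    rw [hmkb, hμdef]
    exact Cardinal.aleph_lt_aleph.mpr (by exact_mod_cast Nat.lt_succ_self m)
  have hμ0 : Cardinal.aleph0 < μ := by
    rw [hμdef, ← Cardinal.aleph_zero]
    exact Cardinal.aleph_lt_aleph.mpr (by exact_mod_cast hm)
  have hreg : μ.IsRegular := by
    obtain ⟨k, rfl⟩ := Nat.exists_eq_add_of_le hm
    rw [hμdef]
    have : ((1 + k : ℕ) : Ordinal) = Order.succ (k : Ordinal) := by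
      rw [Nat.add_comm]
      push_cast
      rw [Ordinal.add_one_eq_succ]
    rw [this]
    exact Cardinal.isRegular_aleph_succ _
  -- index of the block used at stage j
  set idx : ℕ → Fin n := fun j => ⟨j % n, Nat.mod_lt j hn⟩ with hidx
  have hidxval : ∀ i : Fin n, idx i.val = i := by
    intro i
    apply Fin.ext
    simp [hidx, Nat.mod_eq_of_lt i.isLt]
  -- the step relation
  set Q : Set (alephT (m + 1)) → ℕ → ((ℕ → (alephT (m + 1))) × ℕ × Set (alephT (m + 1))) → Prop := fun A j r =>
    Set.InjOn r.1 ↑(Js (idx j)).1 ∧ (∀ x ∈ (Js (idx j)).1, r.1 x ∈ A) ∧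
    r.2.2 ⊆ A ∧ (∀ x ∈ (Js (idx j)).1, r.1 x ∉ r.2.2) ∧
    (∀ x ∈ (Js (idx j)).1, ∀ b ∈ r.2.2, f s(r.1 x, b) = r.2.1) ∧
    (∀ x y u v : ℕ, x ∈ (Js (idx j)).1 → y ∈ (Js (idx j)).1 → u ∈ (Js (idx j)).1 →
      v ∈ (Js (idx j)).1 → x ≠ y → u ≠ v →
      f s(r.1 x, r.1 y) ≠ f s(r.1 u, r.1 v) →
      (Js (idx j)).2 s(x, y) ≠ (Js (idx j)).2 s(u, v)) with hQ
  have hstep : ∀ A : Set (alephT (m + 1)), μ < Cardinal.mk A → ∀ j : ℕ,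
      ∃ r : (ℕ → (alephT (m + 1))) × ℕ × Set (alephT (m + 1)), Q A j r ∧ μ < Cardinal.mk r.2.2 := by
    intro A hA j
    obtain ⟨k, e, A', h1, h2, h3, h4, h5, h6, h7⟩ :=
      ClosureRealized.step_realize hreg hμ0 (le_of_eq hmkm) f (Js (idx j)).1 (Js (idx j)).2
        (hI (Js (idx j)) (hJsI (idx j))) A hA
    exact ⟨(k, e, A'), ⟨h1, h2, h3, h4, h6, h7⟩, h5⟩
  obtain ⟨AA, K, E, hAA0, hQall⟩ := ClosureRealized.chain_exists Q hstep Set.univ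
    (by rw [Cardinal.mk_univ]; exact hmub)
  -- the chain is decreasing
  have hAAmono : ∀ j j' : ℕ, j ≤ j' → AA j' ⊆ AA j := by
    intro j j' h
    refine antitone_nat_of_succ_le (fun k => (hQall k).2.2.1) h
  -- block membership
  have hblock : ∀ x ∈ G, x ∈ (Js (ι x)).1 := by
    intro x hx
    rw [hG] at hx
    obtain ⟨i, _, hi⟩ := Finset.mem_biUnion.mp hx
    rw [hι i x hi]
    exact hi
  -- the final embedding
  set k : ℕ → (alephT (m + 1)) := fun x => K (ι x).val x with hk
  -- specialized facts about k
  have hQi : ∀ i : Fin n,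
      Set.InjOn (K i.val) ↑(Js i).1 ∧ (∀ x ∈ (Js i).1, K i.val x ∈ AA i.val) ∧
      AA (i.val + 1) ⊆ AA i.val ∧ (∀ x ∈ (Js i).1, K i.val x ∉ AA (i.val + 1)) ∧
      (∀ x ∈ (Js i).1, ∀ b ∈ AA (i.val + 1), f s(K i.val x, b) = E i.val) ∧
      (∀ x y u v : ℕ, x ∈ (Js i).1 → y ∈ (Js i).1 → u ∈ (Js i).1 → v ∈ (Js i).1 →
        x ≠ y → u ≠ v → f s(K i.val x, K i.val y) ≠ f s(K i.val u, K i.val v) →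
        (Js i).2 s(x, y) ≠ (Js i).2 s(u, v)) := by
    intro i
    have := hQall i.val
    rw [hQ] at this
    rw [hidxval i] at this
    exact this
  have hkmem : ∀ x ∈ G, k x ∈ AA (ι x).val := fun x hx =>
    (hQi (ι x)).2.1 x (hblock x hx)
  have hknotmem : ∀ x ∈ G, k x ∉ AA ((ι x).val + 1) := fun x hx =>
    (hQi (ι x)).2.2.2.1 x (hblock x hx)
  -- key fact about cross pairs (ordered)
  have hkeycross : ∀ x y : ℕ, x ∈ G → y ∈ G → ι x < ι y →
      f s(k x, k y) = E (ι x).val := by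
    intro x y hx hy hlt
    have h1 : k y ∈ AA ((ι x).val + 1) := by
      refine hAAmono _ _ ?_ (hkmem y hy)
      exact Nat.succ_le_of_lt hlt
    exact (hQi (ι x)).2.2.2.2.1 x (hblock x hx) (k y) h1
  have hcrossval : ∀ x y : ℕ, x ∈ G → y ∈ G → ι x ≠ ι y →
      f s(k x, k y) = E (min (ι x) (ι y)).val := by
    intro x y hx hy hne
    rcases lt_or_gt_of_ne hne with hlt | hgt
    · rw [min_eq_left hlt.le]
      exact hkeycross x y hx hy hlt
    · rw [min_eq_right hgt.le, Sym2.eq_swap]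
      exact hkeycross y x hy hx hgt
  -- injectivity of the final embedding
  have hkinj : Set.InjOn k ↑G := by
    intro x hx y hy hxy
    simp only [Finset.coe_sort_coe, Finset.mem_coe] at hx hy
    by_cases h : ι x = ι y
    · have hx' : x ∈ (Js (ι x)).1 := hblock x hx
      have hy' : y ∈ (Js (ι x)).1 := by rw [h]; exact hblock y hy
      have : K (ι x).val x = K (ι x).val y := by
        rw [hk] at hxy; simpa [h] using hxy
      exact (hQi (ι x)).1 (by exact_mod_cast hx') (by exact_mod_cast hy') this
    · exfalso
      rcases lt_or_gt_of_ne h with hlt | hgt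
      · have h1 : k y ∈ AA ((ι x).val + 1) :=
          hAAmono _ _ (Nat.succ_le_of_lt hlt) (hkmem y hy)
        rw [← hxy] at h1
        exact hknotmem x hx h1
      · have h1 : k x ∈ AA ((ι y).val + 1) :=
          hAAmono _ _ (Nat.succ_le_of_lt hgt) (hkmem x hx)
        rw [hxy] at h1
        exact hknotmem y hy h1
  -- assemble
  refine ⟨k, hkinj, fun x _ => Set.mem_univ _, ?_⟩
  intro x y u v hx hy hu hv hxy huv hfne hceq
  apply hfne
  clear hfne
  by_cases hxyb : ι x = ι y
  · by_cases huvb : ι u = ι v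
    · -- both pairs within blocks
      have hx' : x ∈ (Js (ι x)).1 := hblock x hx
      have hy' : y ∈ (Js (ι x)).1 := by rw [hxyb]; exact hblock y hy
      have hu' : u ∈ (Js (ι u)).1 := hblock u hu
      have hv' : v ∈ (Js (ι u)).1 := by rw [huvb]; exact hblock v hv
      by_cases hij : ι x = ι u
      · -- same block
        rw [hij] at hx' hy'
        have hceq' : (Js (ι u)).2 s(x, y) = (Js (ι u)).2 s(u, v) := by
          rw [← hext (ι u) x y hx' hy' hxy, ← hext (ι u) u v hu' hv' huv]
          exact hceq
        by_contra hfne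
        have : k x = K (ι u).val x ∧ k y = K (ι u).val y := by
          constructor <;> simp [hk, hι (ι u) x hx', hι (ι u) y hy']
        have hku : k u = K (ι u).val u ∧ k v = K (ι u).val v := by
          constructor <;> simp [hk, hι (ι u) u hu', hι (ι u) v hv']
        rw [this.1, this.2, hku.1, hku.2] at hfne
        exact (hQi (ι u)).2.2.2.2.2 x y u v hx' hy' hu' hv' hxy huv hfne hceq'
      · -- different blocks: contradicts disjoint ranges
        exfalso
        refine hranges (ι x) (ι u) hij x y u v hx' hy' hxy hu' hv' huv ?_
        rw [← hext (ι x) x y hx' hy' hxy, ← hext (ι u) u v hu' hv' huv]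
        exact hceq
    · -- (x,y) within a block, (u,v) across blocks: impossible
      exfalso
      have hx' : x ∈ (Js (ι x)).1 := hblock x hx
      have hy' : y ∈ (Js (ι x)).1 := by rw [hxyb]; exact hblock y hy
      have hmem : u ∈ (Js (ι x)).1 ∧ v ∈ (Js (ι x)).1 := by
        refine (hrng (ι x) u v hu hv huv).mp ⟨x, y, hx', hy', hxy, ?_⟩
        rw [← hceq]
        exact hext (ι x) x y hx' hy' hxy
      exact huvb ((hι (ι x) u hmem.1).trans (hι (ι x) v hmem.2).symm)
  · by_cases huvb : ι u = ι v
    · -- symmetric mixed case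
      exfalso
      have hu' : u ∈ (Js (ι u)).1 := hblock u hu
      have hv' : v ∈ (Js (ι u)).1 := by rw [huvb]; exact hblock v hv
      have hmem : x ∈ (Js (ι u)).1 ∧ y ∈ (Js (ι u)).1 := by
        refine (hrng (ι u) x y hx hy hxy).mp ⟨u, v, hu', hv', huv, ?_⟩
        rw [hceq]
        exact hext (ι u) u v hu' hv' huv
      exact hxyb ((hι (ι u) x hmem.1).trans (hι (ι u) y hmem.2).symm)
    · -- both pairs across blocks
      have hmin : min (ι x) (ι y) = min (ι u) (ι v) :=
        (hcross x y u v hx hy hu hv hxy huv hxyb huvb).mp hceq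
      rw [hcrossval x y hx hy hxyb, hcrossval u v hu hv huvb, hmin]
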